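/- Let T be a tree, v a pendant vertex of T with neighbor w, and suppose T has at least 3 vertices. Then f_T(v) = 1 + f_{T−v}(w) and f_T(w) = 2·f_{T−v}(w), so f_T(w) > f_T(v). -/

import Mathlib

open SimpleGraph

/-- Eccentricity of a vertex: maximum distance to any vertex. -/
noncomputable def ecc {V : Type*} [Fintype V] (G : SimpleGraph V) (v : V) : ℕ :=
  Finset.univ.sup fun u => G.dist u v

/-- Center: vertices of minimum eccentricity. -/
noncomputable def center {V : Type*} [Fintype V] (G : SimpleGraph V) : Set V :=
  {v | ∀ u, ecc G v ≤ ecc G u}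

/-- Number of vertices of the component of `G - v` containing `u`; this equals the
number of edges of the corresponding branch of a tree at `v`. -/
noncomputable def branchSize {V : Type*} (G : SimpleGraph V) (v : V) (u : {x : V // x ≠ v}) : ℕ :=
  Set.ncard {x : {y : V // y ≠ v} | (G.induce {y : V | y ≠ v}).Reachable ⟨u.1, u.2⟩ ⟨x.1, x.2⟩}

/-- Weight of a vertex: maximal number of edges in a branch at `v`. -/
noncomputable def weight {V : Type*} [Fintype V] [DecidableEq V] (G : SimpleGraph V) (v : V) : ℕ :=
  Finset.univ.sup fun u : {x : V // x ≠ v} => branchSize G v u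

/-- Centroid: vertices of minimum weight. -/
noncomputable def centroid {V : Type*} [Fintype V] [DecidableEq V] (G : SimpleGraph V) : Set V :=
  {v | ∀ u, weight G v ≤ weight G u}

/-- Number of subtrees (vertex sets inducing a connected subgraph) containing all of `A`. -/
noncomputable def numSubtreesOn {V : Type*} (G : SimpleGraph V) (A : Set V) : ℕ :=
  Set.ncard {S : Set V | A ⊆ S ∧ (G.induce S).Connected}

/-- Number of subtrees containing the vertex `v`. -/
noncomputable def numSubtrees {V : Type*} (G : SimpleGraph V) (v : V) : ℕ :=
  numSubtreesOn G {v}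

/-- Subtree core: vertices maximizing the number of subtrees containing them. -/
noncomputable def subtreeCore {V : Type*} (G : SimpleGraph V) : Set V :=
  {v | ∀ u, numSubtrees G u ≤ numSubtrees G v}

/-- Distance between two sets of vertices: minimum pairwise distance. -/
noncomputable def setDist {V : Type*} (G : SimpleGraph V) (A B : Set V) : ℕ :=
  sInf {d | ∃ a ∈ A, ∃ b ∈ B, G.dist a b = d}

/-- The path-star tree `P_{n-g,g}`: a path on vertices `0, …, n-g-1` (paper labels
`1, …, n-g`) with `g` pendant vertices `n-g, …, n-1` attached to vertex `n-g-1`. -/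
def pathStar (n g : ℕ) : SimpleGraph (Fin n) :=
  SimpleGraph.fromRel fun i j =>
    (i.val + 1 = j.val ∧ j.val < n - g) ∨ (i.val = n - g - 1 ∧ n - g ≤ j.val)

/-- The tree obtained from `G` by detaching the pendant vertex `y` and attaching it
as a pendant vertex adjacent to `w`. -/
def reattach {V : Type*} (G : SimpleGraph V) (y w : V) : SimpleGraph V :=
  SimpleGraph.fromRel fun a b => (G.Adj a b ∧ a ≠ y ∧ b ≠ y) ∨ (a = y ∧ b = w)

section AuxPendant

variable {V : Type}


lemma singleton_connected (G : SimpleGraph V) (a : V) : (G.induce {a}).Connected := by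
  rw [connected_iff]
  refine ⟨fun x y => ?_, ⟨⟨a, rfl⟩⟩⟩
  have : x = y := by
    ext
    rcases x with ⟨x, hx⟩; rcases y with ⟨y, hy⟩
    simp only [Set.mem_singleton_iff] at hx hy
    simp [hx, hy]
  exact this ▸ Reachable.refl _

/-- removing a pendant vertex keeps connectivity -/
lemma remove_leaf {G : SimpleGraph V} {v w : V}
    (huniq : ∀ x, G.Adj v x → x = w) (hvw : v ≠ w) {S : Set V}
    (hwS : w ∈ S) (hconn : (G.induce S).Connected) :
    (G.induce (S \ {v})).Connected := by
  classical
  set π : S → ↑(S \ {v}) := fun x =>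
    if h : (x : V) = v then ⟨w, hwS, hvw.symm⟩ else ⟨x, x.2, h⟩ with hπ
  have key : ∀ (x y : S), (G.induce S).Walk x y →
      (G.induce (S \ {v})).Reachable (π x) (π y) := by
    intro x y p
    induction p with
    | nil => exact Reachable.refl _
    | @cons a b c h p ih =>
      simp only [comap_adj, Function.Embedding.coe_subtype] at h
      by_cases ha : (a : V) = v
      · have hb : (b : V) = w := huniq b (ha ▸ h)
        have : π a = π b := by
          simp [hπ, ha, hb, Ne.symm hvw]
        rw [this]; exact ih
      · by_cases hb : (b : V) = v
        · have haw : (a : V) = w := huniq a (hb ▸ h.symm)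
          have : π a = π b := by
            simp [hπ, ha, hb, haw]
          rw [this]; exact ih
        · refine Reachable.trans (Adj.reachable ?_) ih
          have : π a = ⟨(a : V), a.2, ha⟩ := by simp [hπ, ha]
          rw [this]
          have : π b = ⟨(b : V), b.2, hb⟩ := by simp [hπ, hb]
          rw [this]
          simpa using h
  rw [connected_iff]
  refine ⟨?_, ⟨⟨w, hwS, hvw.symm⟩⟩⟩
  rintro ⟨x, hxS, hxv⟩ ⟨y, hyS, hyv⟩
  obtain ⟨p⟩ := hconn ⟨x, hxS⟩ ⟨y, hyS⟩
  have := key _ _ p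
  have e1 : π ⟨x, hxS⟩ = ⟨x, hxS, hxv⟩ := by
    simp only [hπ]; rw [dif_neg (by simpa using hxv)]
  have e2 : π ⟨y, hyS⟩ = ⟨y, hyS, hyv⟩ := by
    simp only [hπ]; rw [dif_neg (by simpa using hyv)]
  rwa [e1, e2] at this

lemma add_leaf {G : SimpleGraph V} {v w : V} (hadj : G.Adj v w) {S : Set V}
    (hwS : w ∈ S) (hconn : (G.induce S).Connected) :
    (G.induce (insert v S)).Connected := by
  have hub : ∀ x : ↑(insert v S), (G.induce (insert v S)).Reachable x
      ⟨w, Set.mem_insert_of_mem _ hwS⟩ := by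
    rintro ⟨x, hx⟩
    rcases hx with rfl | hxS
    · exact Adj.reachable (by simpa using hadj)
    · have h0 : (G.induce S).Reachable ⟨x, hxS⟩ ⟨w, hwS⟩ := hconn _ _
      have := Reachable.map (G.induceHomOfLE (Set.subset_insert v S)).toHom h0
      exact this
  rw [connected_iff]
  exact ⟨fun x y => (hub x).trans (hub y).symm, ⟨⟨w, Set.mem_insert_of_mem _ hwS⟩⟩⟩

/-- double induce iso -/
noncomputable def induceInduceIso (G : SimpleGraph V) (A : Set V) (S : Set A) :
    (G.induce A).induce S ≃g G.induce (Subtype.val '' S) where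
  toEquiv := Equiv.Set.image Subtype.val S Subtype.val_injective
  map_rel_iff' := by
    rintro ⟨⟨a, hA⟩, hS⟩ ⟨⟨b, hB⟩, hS'⟩
    simp [Equiv.Set.image, Equiv.Set.imageOfInjOn]

lemma connected_image_iff (G : SimpleGraph V) (A : Set V) (S : Set A) :
    ((G.induce A).induce S).Connected ↔ (G.induce (Subtype.val '' S)).Connected :=
  (induceInduceIso G A S).connected_iff

lemma mem_of_conn {G : SimpleGraph V} {v w : V}
    (huniq : ∀ x, G.Adj v x → x = w) {S : Set V} (hvS : v ∈ S)
    {u : V} (huS : u ∈ S) (huv : u ≠ v) (hconn : (G.induce S).Connected) :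
    w ∈ S := by
  obtain ⟨p⟩ := hconn ⟨v, hvS⟩ ⟨u, huS⟩
  cases p with
  | nil => exact absurd rfl huv
  | @cons _ b _ h q =>
    have : G.Adj v b := by simpa using h
    exact huniq b this ▸ b.2

end AuxPendant

/-- If `v` is a pendant vertex of a tree `T` on at least `3` vertices, with neighbor `w`,
then `f_T(v) = 1 + f_{T-v}(w)`, `f_T(w) = 2 f_{T-v}(w)`, hence `f_T(w) > f_T(v)`. -/
theorem numSubtrees_pendant {V : Type} [Fintype V] [DecidableEq V]
    (G : SimpleGraph V) [DecidableRel G.Adj] (hT : G.IsTree)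
    (h3 : 3 ≤ Fintype.card V) (v w : V) (hv : G.degree v = 1) (hw : G.Adj v w) :
    numSubtrees G v = 1 + numSubtrees (G.induce {x : V | x ≠ v}) ⟨w, hw.ne'⟩ ∧
    numSubtrees G w = 2 * numSubtrees (G.induce {x : V | x ≠ v}) ⟨w, hw.ne'⟩ ∧
    numSubtrees G v < numSubtrees G w := by
  classical
  have hvw : v ≠ w := hw.ne
  have huniq : ∀ x, G.Adj v x → x = w := by
    intro x hx
    obtain ⟨a, ha⟩ := Finset.card_eq_one.mp ((G.card_neighborFinset_eq_degree v).trans hv)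
    have h1 : w ∈ G.neighborFinset v := by simpa using hw
    have h2 : x ∈ G.neighborFinset v := by simpa using hx
    rw [ha, Finset.mem_singleton] at h1 h2
    rw [h2, h1]
  set U : Set V := {x : V | x ≠ v} with hU
  set w' : ↑U := ⟨w, hw.ne'⟩ with hw'
  set N := numSubtrees (G.induce U) w' with hN
  set A2 : Set (Set V) := {S | v ∈ S ∧ w ∈ S ∧ (G.induce S).Connected} with hA2
  set B : Set (Set V) := {S | w ∈ S ∧ v ∉ S ∧ (G.induce S).Connected} with hB
  -- B has the same cardinality as the subtrees of G - v containing w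
  have hBN : B.ncard = N := by
    have him : B = (fun S' : Set ↑U => Subtype.val '' S') ''
        {S' : Set ↑U | {w'} ⊆ S' ∧ ((G.induce U).induce S').Connected} := by
      ext S
      simp only [hB, Set.mem_setOf_eq, Set.mem_image, Set.singleton_subset_iff]
      constructor
      · rintro ⟨hwS, hvS, hconn⟩
        refine ⟨{x : ↑U | x.1 ∈ S}, ⟨hwS, ?_⟩, ?_⟩
        · rw [connected_image_iff]
          have himg : Subtype.val '' {x : ↑U | x.1 ∈ S} = S := by
            ext y
            simp only [Set.mem_image, Set.mem_setOf_eq]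
            exact ⟨fun ⟨z, hz, he⟩ => he ▸ hz,
              fun hy => ⟨⟨y, fun h => hvS (h ▸ hy)⟩, hy, rfl⟩⟩
          rw [himg]; exact hconn
        · ext y
          simp only [Set.mem_image, Set.mem_setOf_eq]
          exact ⟨fun ⟨z, hz, he⟩ => he ▸ hz,
            fun hy => ⟨⟨y, fun h => hvS (h ▸ hy)⟩, hy, rfl⟩⟩
      · rintro ⟨S', ⟨hwS', hconn'⟩, rfl⟩
        refine ⟨⟨w', hwS', rfl⟩, ?_, ?_⟩
        · rintro ⟨⟨z, hz⟩, _, hzv⟩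
          exact hz hzv
        · rw [← connected_image_iff]; exact hconn'
    rw [him, Set.ncard_image_of_injective _ (Set.image_injective.mpr Subtype.val_injective)]
    rfl
  -- A2 is in bijection with B via inserting v
  have hA2B : A2.ncard = B.ncard := by
    have him : A2 = (insert v) '' B := by
      ext S
      simp only [hA2, hB, Set.mem_setOf_eq, Set.mem_image]
      constructor
      · rintro ⟨hvS, hwS, hconn⟩
        refine ⟨S \ {v}, ⟨⟨hwS, Ne.symm hvw⟩, by simp,
          remove_leaf huniq hvw hwS hconn⟩, ?_⟩
        rw [Set.insert_diff_singleton, Set.insert_eq_self.mpr hvS]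
      · rintro ⟨S', ⟨hwS', hvS', hconn'⟩, rfl⟩
        exact ⟨Set.mem_insert _ _, Set.mem_insert_of_mem _ hwS',
          add_leaf hw hwS' hconn'⟩
    rw [him]
    apply Set.ncard_image_of_injOn
    intro S1 h1 S2 h2 he
    calc S1 = insert v S1 \ {v} := (Set.insert_diff_self_of_notMem h1.2.1).symm
      _ = insert v S2 \ {v} := by rw [he]
      _ = S2 := Set.insert_diff_self_of_notMem h2.2.1
  -- f_G(v)
  have hfv : numSubtrees G v = 1 + N := by
    have hset : {S : Set V | {v} ⊆ S ∧ (G.induce S).Connected} = insert {v} A2 := by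
      ext S
      simp only [Set.singleton_subset_iff, Set.mem_setOf_eq, Set.mem_insert_iff, hA2]
      constructor
      · rintro ⟨hvS, hconn⟩
        by_cases hS : S = {v}
        · exact Or.inl hS
        · refine Or.inr ⟨hvS, ?_, hconn⟩
          have : ∃ u ∈ S, u ≠ v := by
            by_contra h; push_neg at h
            exact hS (Set.eq_singleton_iff_unique_mem.mpr ⟨hvS, h⟩)
          obtain ⟨u, huS, huv⟩ := this
          exact mem_of_conn huniq hvS huS huv hconn
      · rintro (rfl | ⟨h1, _, h3⟩)
        · exact ⟨rfl, singleton_connected G v⟩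
        · exact ⟨h1, h3⟩
    rw [numSubtrees, numSubtreesOn, hset,
      Set.ncard_insert_of_notMem (fun h => hvw (Set.mem_singleton_iff.mp h.2.1).symm)
        (Set.toFinite _), hA2B, hBN]
    omega
  -- f_G(w)
  have hfw : numSubtrees G w = 2 * N := by
    have hset : {S : Set V | {w} ⊆ S ∧ (G.induce S).Connected} = A2 ∪ B := by
      ext S
      simp only [Set.singleton_subset_iff, Set.mem_setOf_eq, Set.mem_union, hA2, hB]
      constructor
      · rintro ⟨hwS, hconn⟩
        by_cases hvS : v ∈ S
        · exact Or.inl ⟨hvS, hwS, hconn⟩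
        · exact Or.inr ⟨hwS, hvS, hconn⟩
      · rintro (⟨_, h2, h3⟩ | ⟨h1, _, h3⟩)
        · exact ⟨h2, h3⟩
        · exact ⟨h1, h3⟩
    rw [numSubtrees, numSubtreesOn, hset,
      Set.ncard_union_eq (Set.disjoint_left.mpr fun S hS1 hS2 => hS2.2.1 hS1.1)
        (Set.toFinite _) (Set.toFinite _), hA2B, hBN]
    ring
  -- N ≥ 2
  have hN2 : 1 < N := by
    rw [← hBN]
    have huex : ∃ u : V, u ≠ v ∧ u ≠ w := by
      by_contra h
      push_neg at h
      have hsub : (Finset.univ : Finset V) ⊆ {v, w} := by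
        intro u _
        rcases eq_or_ne u v with rfl | huv
        · simp
        · simp [h u huv]
      have hcard := Finset.card_le_card hsub
      rw [Finset.card_univ] at hcard
      have : ({v, w} : Finset V).card ≤ 2 :=
        (Finset.card_insert_le _ _).trans (by simp)
      omega
    obtain ⟨u, huv, huw⟩ := huex
    have h1 : ({w} : Set V) ∈ B := by
      refine ⟨Set.mem_singleton w, ?_, singleton_connected G w⟩
      intro h
      exact hvw (Set.mem_singleton_iff.mp h)
    have h2 : U ∈ B := by
      refine ⟨hw.ne', fun h => h rfl, ?_⟩
      have hconnU : (G.induce (Set.univ \ {v})).Connected :=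
        remove_leaf huniq hvw (Set.mem_univ w)
          ((induceUnivIso G).connected_iff.mpr hT.isConnected)
      have : Set.univ \ {v} = U := by
        ext x; simp [hU]
      rwa [this] at hconnU
    have hne : ({w} : Set V) ≠ U := by
      intro h
      have : u ∈ ({w} : Set V) := h.symm ▸ (huv : u ∈ U)
      exact huw (Set.mem_singleton_iff.mp this)
    exact (Set.one_lt_ncard (Set.toFinite _)).mpr ⟨{w}, h1, U, h2, hne⟩
  exact ⟨hfv, hfw, by rw [hfv, hfw]; omega⟩
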